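/- For every n and every i with 0 < i < |Wₙ|, the subword of W of length |Wₙ| beginning at position i equals the suffix of Wₙ of length |Wₙ| − i followed by the prefix of Wₙ of length i; in particular, this subword contains exactly 3ⁿ occurrences of the letter 0, the same number as Wₙ. -/

import Mathlib

open Filter

/-- The Chacón words: `W₀ = 0`, `W_{n+1} = Wₙ Wₙ 1 Wₙ`. -/
def chaconWord : ℕ → List (Fin 2)
  | 0 => [0]
  | n + 1 => chaconWord n ++ chaconWord n ++ [1] ++ chaconWord n

/-- `W` is the infinite word having every `Wₙ` as an initial segment. -/
def IsChaconInfWord (W : ℕ → Fin 2) : Prop :=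
  ∀ n i, i < (chaconWord n).length → W i = (chaconWord n).getD i 0

/-- A finite word `α` occurs in a finite word `β` at position `j`. -/
def OccursAt (α β : List (Fin 2)) (j : ℕ) : Prop :=
  j + α.length ≤ β.length ∧ ∀ k < α.length, β.getD (j + k) 0 = α.getD k 0

/-- A finite word `α` occurs in the infinite word `W` at position `j`. -/
def OccursAtInf (W : ℕ → Fin 2) (α : List (Fin 2)) (j : ℕ) : Prop :=
  ∀ k < α.length, W (j + k) = α.getD k 0

/-- The subword of the infinite word `W` of length `L` beginning at position `i`. -/
def subword (W : ℕ → Fin 2) (i L : ℕ) : List (Fin 2) :=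
  (List.range L).map fun k => W (i + k)

/-- The (normalized) Hamming distance `d` of two finite words. -/
noncomputable def hamming (α β : List (Fin 2)) : ℝ :=
  (((Finset.range α.length).filter fun i => α.getD i 0 ≠ β.getD i 0).card : ℝ) / α.length

/-- The modified 0-Hamming distance `d₀` of two finite words. -/
noncomputable def hamming0 (α β : List (Fin 2)) : ℝ :=
  (((Finset.range α.length).filter fun i => α.getD i 0 = 0 ∧ β.getD i 0 = 1).card : ℝ) /
    (((Finset.range α.length).filter fun i => α.getD i 0 = 0).card : ℝ)


lemma count_chacon (n : ℕ) : (chaconWord n).count 0 = 3 ^ n := by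
  induction n with
  | zero => decide
  | succ n ih =>
      simp [chaconWord, List.count_append, ih, pow_succ]
      ring

theorem chacon_shifted_subword (W : ℕ → Fin 2) (hW : IsChaconInfWord W) (n i : ℕ)
    (hi0 : 0 < i) (hin : i < (chaconWord n).length) :
    subword W i (chaconWord n).length = (chaconWord n).drop i ++ (chaconWord n).take i ∧
      (subword W i (chaconWord n).length).count 0 = 3 ^ n := by
  have hL : 0 < (chaconWord n).length := by
    cases n <;> simp [chaconWord]
  set L := (chaconWord n).length with hLdef
  have hlen1 : (chaconWord (n+1)).length = L + L + 1 + L := by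
    simp [chaconWord]; omega
  have hmain : subword W i L = (chaconWord n).drop i ++ (chaconWord n).take i := by
    apply List.ext_getElem
    · simp [subword]; omega
    · intro k h1 h2
      have hkL : k < L := by simpa [subword] using h1
      have hget : (subword W i L)[k] = W (i + k) := by
        simp [subword]
      rw [hget]
      by_cases hk : k < L - i
      · have hik : i + k < L := by omega
        have := hW n (i + k) hik
        rw [this, List.getD_eq_getElem _ _ hik,
          List.getElem_append_left (by simp; omega),
          List.getElem_drop]
      · have hik : i + k < (chaconWord (n+1)).length := by omega
        have := hW (n+1) (i + k) hik
        rw [this]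
        have hdl : ((chaconWord n).drop i).length = L - i := by simp [hLdef]
        rw [List.getElem_append_right (by rw [hdl]; omega)]
        have e1 : chaconWord (n+1) = chaconWord n ++ (chaconWord n ++ ([1] ++ chaconWord n)) := by
          simp [chaconWord]
        rw [e1, List.getD_append_right _ _ _ _ (by omega),
          List.getD_append _ _ _ _ (by omega),
          List.getD_eq_getElem _ _ (show i + k - L < L by omega)]
        simp only [hdl]
        rw [List.getElem_take]
        congr 1
        simp only [hLdef]
        omega
  refine ⟨hmain, ?_⟩
  rw [hmain, List.count_append, Nat.add_comm, ← List.count_append,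
    List.take_append_drop, count_chacon]
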